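/- The star graph K_{1,m} (m ≥ 1) has modularity q*(K_{1,m}) = 0. -/

import Mathlib

open Finset
open scoped Classical

variable {V : Type*} [Fintype V] [DecidableEq V]

/-- Number of edges of `G` inside vertex set `A` (as a real number). -/
noncomputable def eIn (G : SimpleGraph V) (A : Finset V) : ℝ :=
  (1/2) * ∑ u ∈ A, ∑ v ∈ A, if G.Adj u v then (1:ℝ) else 0

/-- Total number of edges of `G` (as a real number). -/
noncomputable def numEdges (G : SimpleGraph V) : ℝ := eIn G (univ : Finset V)

/-- Degree of vertex `v` in `G` (as a real number). -/
noncomputable def degR (G : SimpleGraph V) (v : V) : ℝ :=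
  ∑ u : V, if G.Adj v u then (1:ℝ) else 0

/-- Volume of vertex set `A`: sum of degrees of its vertices. -/
noncomputable def vol (G : SimpleGraph V) (A : Finset V) : ℝ := ∑ v ∈ A, degR G v

/-- Number of edges of `G` between `A` and its complement (as a real number). -/
noncomputable def eCross (G : SimpleGraph V) (A : Finset V) : ℝ :=
  ∑ u ∈ A, ∑ v ∈ (univ : Finset V) \ A, if G.Adj u v then (1:ℝ) else 0

/-- The modularity score of a vertex partition `P` of `G`. -/
noncomputable def modScore (G : SimpleGraph V) (P : Finpartition (univ : Finset V)) : ℝ :=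
  (∑ A ∈ P.parts, eIn G A) / numEdges G
    - (∑ A ∈ P.parts, (vol G A)^2) / (4 * (numEdges G)^2)

/-- The modularity of `G`: the supremum of modularity scores over all vertex partitions. -/
noncomputable def modularity (G : SimpleGraph V) : ℝ :=
  sSup { q : ℝ | ∃ P : Finpartition (univ : Finset V), q = modScore G P }

/-- The star `K_{1,m}` on `m+1` vertices, with center `0` joined to `m` leaves. -/
def starGraph (m : ℕ) : SimpleGraph (Fin (m+1)) where
  Adj u v := (u = 0 ∧ v ≠ 0) ∨ (v = 0 ∧ u ≠ 0)
  symm := ⟨by intro u v h; tauto⟩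
  loopless := ⟨by intro u h; tauto⟩

lemma sum_ind {α : Type*} (A : Finset α) (P : α → Prop) [DecidablePred P] :
    ∑ v ∈ A, (if P v then (1:ℝ) else 0) = (A.filter P).card := by
  simp [Finset.sum_boole]

lemma degR_star (m : ℕ) (v : Fin (m+1)) :
    degR (starGraph m) v = if v = 0 then (m:ℝ) else 1 := by
  unfold degR
  by_cases hv : v = 0
  · subst hv
    rw [if_pos rfl]
    have h1 : ∀ u : Fin (m+1), (starGraph m).Adj 0 u ↔ u ≠ 0 := by
      intro u; simp [starGraph]
    calc ∑ u : Fin (m+1), (if (starGraph m).Adj 0 u then (1:ℝ) else 0)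
        = ∑ u : Fin (m+1), (if u ≠ 0 then (1:ℝ) else 0) := by
          exact Finset.sum_congr rfl fun u _ => by simp [h1 u]
      _ = ((univ : Finset (Fin (m+1))).filter (· ≠ 0)).card := sum_ind _ _
      _ = (m : ℝ) := by
          rw [Finset.filter_ne']
          rw [Finset.card_erase_of_mem (Finset.mem_univ _)]
          simp
  · rw [if_neg hv]
    have h1 : ∀ u : Fin (m+1), (starGraph m).Adj v u ↔ u = 0 := by
      intro u; simp [starGraph, hv]
    calc ∑ u : Fin (m+1), (if (starGraph m).Adj v u then (1:ℝ) else 0)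
        = ∑ u : Fin (m+1), (if u = 0 then (1:ℝ) else 0) := by
          exact Finset.sum_congr rfl fun u _ => by simp [h1 u]
      _ = ((univ : Finset (Fin (m+1))).filter (· = 0)).card := sum_ind _ _
      _ = 1 := by rw [Finset.filter_eq']; simp

lemma vol_star (m : ℕ) (A : Finset (Fin (m+1))) :
    vol (starGraph m) A =
      if (0 : Fin (m+1)) ∈ A then (m : ℝ) + ((A.card : ℝ) - 1) else A.card := by
  unfold vol
  rw [Finset.sum_congr rfl fun v _ => degR_star m v]
  by_cases h0 : (0 : Fin (m+1)) ∈ A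
  · rw [if_pos h0, ← Finset.add_sum_erase A _ h0, if_pos rfl]
    have : ∑ v ∈ A.erase 0, (if v = 0 then (m:ℝ) else 1) = ∑ v ∈ A.erase 0, (1:ℝ) := by
      refine Finset.sum_congr rfl fun v hv => ?_
      rw [if_neg (Finset.ne_of_mem_erase hv)]
    rw [this, Finset.sum_const, Finset.card_erase_of_mem h0]
    have hc : 1 ≤ A.card := Finset.card_pos.mpr ⟨0, h0⟩
    rw [nsmul_eq_mul, Nat.cast_sub hc]
    push_cast; ring
  · rw [if_neg h0]
    have : ∑ v ∈ A, (if v = 0 then (m:ℝ) else 1) = ∑ v ∈ A, (1:ℝ) := by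
      refine Finset.sum_congr rfl fun v hv => ?_
      rw [if_neg (by rintro rfl; exact h0 hv)]
    rw [this, Finset.sum_const]; simp

lemma eIn_star (m : ℕ) (A : Finset (Fin (m+1))) :
    eIn (starGraph m) A = if (0 : Fin (m+1)) ∈ A then (A.card : ℝ) - 1 else 0 := by
  unfold eIn
  by_cases h0 : (0 : Fin (m+1)) ∈ A
  · rw [if_pos h0]
    have hc : 1 ≤ A.card := Finset.card_pos.mpr ⟨0, h0⟩
    have hinner : ∀ u ∈ A, (∑ v ∈ A, if (starGraph m).Adj u v then (1:ℝ) else 0)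
        = if u = 0 then ((A.card : ℝ) - 1) else 1 := by
      intro u hu
      by_cases hu0 : u = 0
      · subst hu0; rw [if_pos rfl]
        have : ∀ v ∈ A, ((if (starGraph m).Adj 0 v then (1:ℝ) else 0) = if v ≠ 0 then 1 else 0) := by
          intro v _; simp [starGraph]
        rw [Finset.sum_congr rfl this, sum_ind, Finset.filter_ne',
          Finset.card_erase_of_mem h0, Nat.cast_sub hc, Nat.cast_one]
      · rw [if_neg hu0]
        have : ∀ v ∈ A, ((if (starGraph m).Adj u v then (1:ℝ) else 0) = if v = 0 then 1 else 0) := by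
          intro v _; simp [starGraph, hu0]
        rw [Finset.sum_congr rfl this, sum_ind, Finset.filter_eq', if_pos h0]
        simp
    rw [Finset.sum_congr rfl hinner, ← Finset.add_sum_erase A _ h0, if_pos rfl]
    have : ∑ u ∈ A.erase 0, (if u = 0 then ((A.card : ℝ) - 1) else 1) = ∑ u ∈ A.erase 0, (1:ℝ) := by
      refine Finset.sum_congr rfl fun u hu => ?_
      rw [if_neg (Finset.ne_of_mem_erase hu)]
    rw [this, Finset.sum_const, Finset.card_erase_of_mem h0, nsmul_eq_mul, Nat.cast_sub hc]
    push_cast; ring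
  · rw [if_neg h0]
    have : ∀ u ∈ A, (∑ v ∈ A, if (starGraph m).Adj u v then (1:ℝ) else 0) = 0 := by
      intro u hu
      refine Finset.sum_eq_zero fun v hv => ?_
      rw [if_neg]
      rintro (⟨rfl, -⟩ | ⟨rfl, -⟩)
      · exact h0 hu
      · exact h0 hv
    rw [Finset.sum_congr rfl this, Finset.sum_const]; simp

lemma numEdges_star (m : ℕ) : numEdges (starGraph m) = m := by
  unfold numEdges
  rw [eIn_star, if_pos (Finset.mem_univ _)]
  simp

/-- the star `K_{1,m}` (`m ≥ 1`) has modularity 0. -/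
theorem modularity_star (m : ℕ) (hm : 1 ≤ m) :
    modularity (starGraph m) = 0 := by
  have hm' : (0:ℝ) < m := by exact_mod_cast hm
  set S := { q : ℝ | ∃ P : Finpartition (univ : Finset (Fin (m+1))), q = modScore (starGraph m) P }
    with hS
  have hub : ∀ q ∈ S, q ≤ 0 := by
    rintro q ⟨P, rfl⟩
    set A0 := P.part 0 with hA0
    have hA0mem : A0 ∈ P.parts := P.part_mem.mpr (Finset.mem_univ _)
    have h0A0 : (0 : Fin (m+1)) ∈ A0 := P.mem_part (Finset.mem_univ _)
    have hcard : 1 ≤ A0.card := Finset.card_pos.mpr ⟨0, h0A0⟩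
    set a : ℝ := (A0.card : ℝ) with ha
    have ha1 : 1 ≤ a := by rw [ha]; exact_mod_cast hcard
    have hsum_eIn : ∑ A ∈ P.parts, eIn (starGraph m) A = a - 1 := by
      rw [Finset.sum_congr rfl fun A _ => eIn_star m A]
      rw [Finset.sum_eq_single_of_mem A0 hA0mem]
      · rw [if_pos h0A0]
      · intro B hB hBne
        rw [if_neg]
        intro h0B
        exact hBne (P.eq_of_mem_parts hB hA0mem h0B h0A0)
    have hsum_vol : (vol (starGraph m) A0)^2 ≤ ∑ A ∈ P.parts, (vol (starGraph m) A)^2 :=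
      Finset.single_le_sum (f := fun A => (vol (starGraph m) A)^2) (fun A _ => sq_nonneg _) hA0mem
    have hvolA0 : vol (starGraph m) A0 = (m : ℝ) + (a - 1) := by
      rw [vol_star, if_pos h0A0]
    rw [modScore, numEdges_star, hsum_eIn]
    have key : (a - 1) / m ≤ (∑ A ∈ P.parts, (vol (starGraph m) A)^2) / (4 * (m:ℝ)^2) := by
      rw [div_le_div_iff₀ hm' (by positivity)]
      have h2 : ((m:ℝ) + (a-1))^2 ≤ ∑ A ∈ P.parts, (vol (starGraph m) A)^2 := by
        rw [← hvolA0]; exact hsum_vol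
      nlinarith [sq_nonneg ((m:ℝ) - (a-1))]
    linarith
  have h0S : (0:ℝ) ∈ S := by
    refine ⟨Finpartition.indiscrete (Finset.univ_nonempty.ne_empty), ?_⟩
    rw [modScore, Finpartition.indiscrete_parts, Finset.sum_singleton, Finset.sum_singleton,
      numEdges_star, eIn_star, if_pos (Finset.mem_univ _), vol_star,
      if_pos (Finset.mem_univ _)]
    have hcard : ((univ : Finset (Fin (m+1))).card : ℝ) = (m:ℝ) + 1 := by simp
    rw [hcard]
    field_simp
    ring
  refine le_antisymm (csSup_le ⟨0, h0S⟩ hub) (le_csSup ⟨0, hub⟩ h0S)
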